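/- In the Brauer algebra B_n(ω), the symmetrizer S_n = (1/n!) ∏_{1 ≤ i < j ≤ n} ρ_{ij}(i - j), with ρ_{ij}(u) = 1 - s_{ij}/u + ε_{ij}/(u - ω/2 + 1) and the product taken in lexicographic order on (i,j), satisfies ε_k S_n = 0 and s_k S_n = S_n for all k = 1,...,n-1. -/

import Mathlib

open scoped BigOperators

/-- The defining relations of the Brauer algebra `B_n(ω)`, expressed in terms of the
transposition elements `s i j` and contraction elements `ε i j`. -/
structure BrauerRels (K : Type*) [Field K] (A : Type*) [Ring A] [Algebra K A]
    (ω : K) (s ε : ℕ → ℕ → A) : Prop where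
  s_symm : ∀ i j, s i j = s j i
  e_symm : ∀ i j, ε i j = ε j i
  s_sq : ∀ i j, i ≠ j → s i j * s i j = 1
  e_sq : ∀ i j, i ≠ j → ε i j * ε i j = ω • ε i j
  se : ∀ i j, i ≠ j → s i j * ε i j = ε i j
  es : ∀ i j, i ≠ j → ε i j * s i j = ε i j
  conj_s : ∀ i j k, i ≠ j → j ≠ k → i ≠ k → s i j * s j k * s i j = s i k
  conj_e : ∀ i j k, i ≠ j → j ≠ k → i ≠ k → s i j * ε j k * s i j = ε i k
  eee : ∀ i j k, i ≠ j → j ≠ k → i ≠ k → ε i j * ε j k * ε i j = ε i j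
  ese : ∀ i j k, i ≠ j → j ≠ k → i ≠ k → ε i j * s j k * ε i j = ε i j
  ee_es : ∀ i j k, i ≠ j → j ≠ k → i ≠ k → ε i j * ε j k = ε i j * s i k
  ee_es' : ∀ i j k, i ≠ j → j ≠ k → i ≠ k → ε j k * ε i j = ε j k * s i k
  ss_comm : ∀ i j k l, i ≠ k → i ≠ l → j ≠ k → j ≠ l →
    s i j * s k l = s k l * s i j
  se_comm : ∀ i j k l, i ≠ k → i ≠ l → j ≠ k → j ≠ l →
    s i j * ε k l = ε k l * s i j
  ee_comm : ∀ i j k l, i ≠ k → i ≠ l → j ≠ k → j ≠ l →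
    ε i j * ε k l = ε k l * ε i j

/-- `ρ_{ij}(u) = 1 - s_{ij}/u + ε_{ij}/(u - κ)`. -/
noncomputable def brauerRho {K : Type*} [Field K] {A : Type*} [Ring A] [Algebra K A]
    (κ : K) (s ε : ℕ → ℕ → A) (i j : ℕ) (u : K) : A :=
  1 - u⁻¹ • s i j + (u - κ)⁻¹ • ε i j

/-- The list of pairs `(i, j)` with `0 ≤ i < j < n`, in lexicographic order. -/
def lexPairs (n : ℕ) : List (ℕ × ℕ) :=
  (List.range n).flatMap fun i => ((List.range n).filter fun j => i < j).map fun j => (i, j)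

/-- The symmetrizer `S_n = (1/n!) ∏_{i<j} ρ_{ij}(i-j)` of the Brauer algebra (product in
lexicographic order on the pairs `(i,j)`, strands labelled `0, …, n-1`). -/
noncomputable def brauerSymmetrizer {K : Type*} [Field K] {A : Type*} [Ring A] [Algebra K A]
    (ω : K) (s ε : ℕ → ℕ → A) (n : ℕ) : A :=
  ((Nat.factorial n : K))⁻¹ •
    (((lexPairs n).map fun p =>
      brauerRho (ω / 2 - 1) s ε p.1 p.2 ((p.1 : K) - (p.2 : K))).prod)

section BrauerAux

variable {K : Type*} [Field K] {A : Type*} [Ring A] [Algebra K A]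
variable {ω : K} {s ε : ℕ → ℕ → A}

namespace BrauerRels

theorem swap_se (hB : BrauerRels K A ω s ε) (x y z : ℕ) (hxy : x ≠ y) (hyz : y ≠ z)
    (hxz : x ≠ z) : s x y * ε y z = ε x z * s x y := by
  have h2 := congrArg (· * s x y) (hB.conj_e x y z hxy hyz hxz)
  simpa only [mul_assoc, hB.s_sq x y hxy, mul_one] using h2

theorem swap_ss (hB : BrauerRels K A ω s ε) (x y z : ℕ) (hxy : x ≠ y) (hyz : y ≠ z)
    (hxz : x ≠ z) : s x y * s y z = s x z * s x y := by
  have h2 := congrArg (· * s x y) (hB.conj_s x y z hxy hyz hxz)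
  simpa only [mul_assoc, hB.s_sq x y hxy, mul_one] using h2

set_option maxHeartbeats 2000000 in
/-- The Yang–Baxter equation for the Brauer `ρ`-functions. -/
theorem ybe [CharZero K] (hB : BrauerRels K A ω s ε) (i j k : ℕ)
    (hij : i ≠ j) (hjk : j ≠ k) (hik : i ≠ k) (u v : K)
    (hu : u ≠ 0) (hv : v ≠ 0) (huv : u + v ≠ 0)
    (hu' : u - (ω / 2 - 1) ≠ 0) (hv' : v - (ω / 2 - 1) ≠ 0)
    (huv' : u + v - (ω / 2 - 1) ≠ 0) :
    brauerRho (ω / 2 - 1) s ε i j u * brauerRho (ω / 2 - 1) s ε i k (u + v) *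
        brauerRho (ω / 2 - 1) s ε j k v =
      brauerRho (ω / 2 - 1) s ε j k v * brauerRho (ω / 2 - 1) s ε i k (u + v) *
        brauerRho (ω / 2 - 1) s ε i j u := by
  have hji := hij.symm
  have hkj := hjk.symm
  have hki := hik.symm
  have cons2 : ∀ {a b c : A}, a * b = c → ∀ x : A, a * (b * x) = c * x := by
    intro a b c h x; rw [← mul_assoc, h]
  have cons2' : ∀ {a b c d : A}, a * b = c * d → ∀ x : A, a * (b * x) = c * (d * x) := by
    intro a b c d h x; rw [← mul_assoc, h, mul_assoc]
  have cons2s : ∀ {a b c : A} {w : K}, a * b = w • c → ∀ x : A, a * (b * x) = w • (c * x) := by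
    intro a b c w h x; rw [← mul_assoc, h, smul_mul_assoc]
  have cons3 : ∀ {a b c d : A}, a * (b * c) = d → ∀ x : A, a * (b * (c * x)) = d * x := by
    intro a b c d h x; rw [← mul_assoc, ← mul_assoc, mul_assoc a b c, h]
  have cons3' : ∀ {a b c d e : A}, a * (b * c) = d * e → ∀ x : A,
      a * (b * (c * x)) = d * (e * x) := by
    intro a b c d e h x; rw [← mul_assoc, ← mul_assoc, mul_assoc a b c, h, mul_assoc]
  -- basic relations
  have r11 : s i j * s i j = 1 := hB.s_sq _ _ hij
  have r21 : ε i j * ε i j = ω • ε i j := hB.e_sq _ _ hij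
  have r31 : s i j * ε i j = ε i j := hB.se _ _ hij
  have r41 : ε i j * s i j = ε i j := hB.es _ _ hij
  have r12 : s i k * s i k = 1 := hB.s_sq _ _ hik
  have r22 : ε i k * ε i k = ω • ε i k := hB.e_sq _ _ hik
  have r32 : s i k * ε i k = ε i k := hB.se _ _ hik
  have r42 : ε i k * s i k = ε i k := hB.es _ _ hik
  have r13 : s j k * s j k = 1 := hB.s_sq _ _ hjk
  have r23 : ε j k * ε j k = ω • ε j k := hB.e_sq _ _ hjk
  have r33 : s j k * ε j k = ε j k := hB.se _ _ hjk
  have r43 : ε j k * s j k = ε j k := hB.es _ _ hjk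
  -- s past e
  have r5a : s i j * ε i k = ε j k * s i j := by
    rw [hB.s_symm i j]; exact hB.swap_se j i k hji hik hjk
  have r5b : s i j * ε j k = ε i k * s i j := hB.swap_se i j k hij hjk hik
  have r5c : s i k * ε i j = ε j k * s i k := by
    rw [hB.s_symm i k, hB.e_symm j k]; exact hB.swap_se k i j hki hij hkj
  have r5d : s i k * ε j k = ε i j * s i k := by
    rw [hB.e_symm j k]; exact hB.swap_se i k j hik hkj hij
  have r5e : s j k * ε i j = ε i k * s j k := by
    rw [hB.s_symm j k, hB.e_symm i j, hB.e_symm i k]; exact hB.swap_se k j i hkj hji hki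
  have r5f : s j k * ε i k = ε i j * s j k := by
    rw [hB.e_symm i k, hB.e_symm i j]; exact hB.swap_se j k i hjk hki hji
  -- e e reductions
  have r6a : ε i j * ε i k = ε i j * s j k := by
    rw [hB.e_symm i j]; exact hB.ee_es j i k hji hik hjk
  have r6b : ε i j * ε j k = ε i j * s i k := hB.ee_es i j k hij hjk hik
  have r6c : ε i k * ε i j = ε i k * s j k := by
    rw [hB.e_symm i k, hB.s_symm j k]; exact hB.ee_es k i j hki hij hkj
  have r6d : ε i k * ε j k = ε i k * s i j := by
    rw [hB.e_symm j k]; exact hB.ee_es i k j hik hkj hij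
  have r6e : ε j k * ε i j = ε j k * s i k := by
    rw [hB.e_symm j k, hB.e_symm i j, hB.s_symm i k]; exact hB.ee_es k j i hkj hji hki
  have r6f : ε j k * ε i k = ε j k * s i j := by
    rw [hB.e_symm i k, hB.s_symm i j]; exact hB.ee_es j k i hjk hki hji
  -- s s reductions
  have r7a : s j k * s i j = s i k * s j k := by
    rw [hB.s_symm j k, hB.s_symm i j, hB.s_symm i k]; exact hB.swap_ss k j i hkj hji hki
  have r7b : s i k * s j k = s i j * s i k := by
    rw [hB.s_symm j k]; exact hB.swap_ss i k j hik hkj hij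
  have r7c : s i j * s j k = s i k * s i j := hB.swap_ss i j k hij hjk hik
  have r7d : s j k * s i k = s i j * s j k := by
    rw [hB.s_symm i k, hB.s_symm i j]; exact hB.swap_ss j k i hjk hki hji
  -- length three s words
  have r8a : s i j * (s i k * s i j) = s j k := by
    rw [hB.s_symm i j, ← mul_assoc]; exact hB.conj_s j i k hji hik hjk
  have r8b : s i k * (s i j * s i k) = s j k := by
    rw [hB.s_symm i k, hB.s_symm j k, ← mul_assoc]; exact hB.conj_s k i j hki hij hkj
  -- e times two-letter s words
  have r9a : ε i j * (s i k * s i j) = ε i j * s j k := by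
    rw [← r7c, ← mul_assoc, hB.es i j hij]
  have r9b : ε i k * (s i j * s i k) = ε i k * s j k := by
    rw [← r7b, ← mul_assoc, hB.es i k hik]
  have r9c : ε j k * (s i j * s i k) = ε j k * s i j := by
    have h : s j k * s i j = s i j * s i k := r7a.trans r7b
    rw [← h, ← mul_assoc, hB.es j k hjk]
  have r9d : ε j k * (s i k * s i j) = ε j k * s i k := by
    have h : s j k * s i k = s i k * s i j := r7d.trans r7c
    rw [← h, ← mul_assoc, hB.es j k hjk]
  set κ := ω / 2 - 1 with hκ
  have hω2 : ω = 2 * κ + 2 := by rw [hκ]; ring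
  rw [hω2] at r21 r22 r23
  simp only [brauerRho]
  simp only [sub_mul, mul_sub, add_mul, mul_add, smul_mul_assoc, mul_smul_comm, smul_smul,
    one_mul, mul_one, mul_assoc]
  simp only [r11, cons2 r11, r21, cons2s r21, r31, cons2 r31, r41, cons2 r41,
    r12, cons2 r12, r22, cons2s r22, r32, cons2 r32, r42, cons2 r42,
    r13, cons2 r13, r23, cons2s r23, r33, cons2 r33, r43, cons2 r43,
    r5a, cons2' r5a, r5b, cons2' r5b, r5c, cons2' r5c, r5d, cons2' r5d,
    r5e, cons2' r5e, r5f, cons2' r5f,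
    r6a, cons2' r6a, r6b, cons2' r6b, r6c, cons2' r6c, r6d, cons2' r6d,
    r6e, cons2' r6e, r6f, cons2' r6f,
    r7a, cons2' r7a, r7b, cons2' r7b, r7c, cons2' r7c, r7d, cons2' r7d,
    r8a, cons3 r8a, r8b, cons3 r8b,
    r9a, cons3' r9a, r9b, cons3' r9b, r9c, cons3' r9c, r9d, cons3' r9d,
    one_mul, mul_one, smul_smul]
  clear_value κ
  clear hκ hω2 r11 r21 r31 r41 r12 r22 r32 r42 r13 r23 r33 r43
  clear r5a r5b r5c r5d r5e r5f r6a r6b r6c r6d r6e r6f r7a r7b r7c r7d r8a r8b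
  clear r9a r9b r9c r9d cons2 cons2' cons2s cons3 cons3' hB
  have h1 : u * u⁻¹ = 1 := mul_inv_cancel₀ hu
  have h2 : v * v⁻¹ = 1 := mul_inv_cancel₀ hv
  have h3 : (u + v) * (u + v)⁻¹ = 1 := mul_inv_cancel₀ huv
  have h4 : (u - κ) * (u - κ)⁻¹ = 1 := mul_inv_cancel₀ hu'
  have h5 : (v - κ) * (v - κ)⁻¹ = 1 := mul_inv_cancel₀ hv'
  have h6 : (u + v - κ) * (u + v - κ)⁻¹ = 1 := mul_inv_cancel₀ huv'
  match_scalars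
  · ring1
  · ring1
  · ring1
  · ring1
  · linear_combination (-(v⁻¹*(u + v)⁻¹)) * h1 + (-(u⁻¹*(u + v)⁻¹)) * h2 + (-(-u⁻¹*v⁻¹)) * h3
  · linear_combination (-((u - κ)⁻¹*(v - κ)⁻¹ + (u - κ)⁻¹*(v - κ)⁻¹*(u + v - κ)⁻¹ - (u + v)⁻¹*(v - κ)⁻¹ - (u + v)⁻¹*(u - κ)⁻¹ - 2*(u + v)⁻¹*(u - κ)⁻¹*(v - κ)⁻¹ + v⁻¹*(u + v)⁻¹*(u - κ)⁻¹ - 2*κ*(u + v)⁻¹*(u - κ)⁻¹*(v - κ)⁻¹)) * h1 + (-(u⁻¹*(u + v)⁻¹*(v - κ)⁻¹ + u*u⁻¹*(u - κ)⁻¹*(v - κ)⁻¹ + u*u⁻¹*(u - κ)⁻¹*(v - κ)⁻¹*(u + v - κ)⁻¹ - u*u⁻¹*(u + v)⁻¹*(v - κ)⁻¹ - u*u⁻¹*(u + v)⁻¹*(u - κ)⁻¹ - 2*u*u⁻¹*(u + v)⁻¹*(u - κ)⁻¹*(v - κ)⁻¹ - 2*u*κ*u⁻¹*(u + v)⁻¹*(u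 - κ)⁻¹*(v - κ)⁻¹)) * h2 + (-(-u⁻¹*v⁻¹*(u + v - κ)⁻¹ + u*v*u⁻¹*v⁻¹*(u - κ)⁻¹*(v - κ)⁻¹ + u*v*u⁻¹*v⁻¹*(u - κ)⁻¹*(v - κ)⁻¹*(u + v - κ)⁻¹)) * h3 + (-(-v*u⁻¹*v⁻¹*(u + v)⁻¹*(u + v - κ)⁻¹ + v*u⁻¹*v⁻¹*(u + v)⁻¹*(v - κ)⁻¹ - u*u⁻¹*v⁻¹*(u + v)⁻¹*(u + v - κ)⁻¹ - u*v*u⁻¹*v⁻¹*(u + v)⁻¹*(v - κ)⁻¹)) * h4 + (-(v*κ*u⁻¹*v⁻¹*(u + v)⁻¹*(u - κ)⁻¹*(u + v - κ)⁻¹ + u*u⁻¹*v⁻¹*(u + v)⁻¹*(u - κ)⁻¹ + u*κ*u⁻¹*v⁻¹*(u + v)⁻¹*(u - κ)⁻¹*(u + v - κ)⁻¹ - u*v*u⁻¹*v⁻¹*(u + v)⁻¹*(u - κ)⁻¹ - u*v*u⁻¹*v⁻¹*(u + v)⁻¹*(u - κ)⁻¹*(u + v - κ)⁻¹ - u^2*u⁻¹*v⁻¹*(u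 + v)⁻¹*(u - κ)⁻¹*(u + v - κ)⁻¹)) * h5 + (-(-v*κ*u⁻¹*v⁻¹*(u + v)⁻¹*(u - κ)⁻¹*(v - κ)⁻¹ - u*κ*u⁻¹*v⁻¹*(u + v)⁻¹*(u - κ)⁻¹*(v - κ)⁻¹)) * h6
  · ring1
  · linear_combination (-(-(v - κ)⁻¹*(u + v - κ)⁻¹)) * h1 + (-(-u⁻¹*(u + v - κ)⁻¹)) * h5 + (-(u⁻¹*(v - κ)⁻¹)) * h6
  · linear_combination (-((u - κ)⁻¹*(u + v - κ)⁻¹)) * h2 + (-(v⁻¹*(u + v - κ)⁻¹)) * h4 + (-(-v⁻¹*(u - κ)⁻¹)) * h6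
  · ring1
  · linear_combination (-(-v⁻¹*(u + v)⁻¹)) * h1 + (-(-u⁻¹*(u + v)⁻¹)) * h2 + (-(u⁻¹*v⁻¹)) * h3
  · linear_combination (-(-(u - κ)⁻¹*(u + v - κ)⁻¹)) * h2 + (-(-v⁻¹*(u + v - κ)⁻¹)) * h4 + (-(v⁻¹*(u - κ)⁻¹)) * h6
  · linear_combination (-(-(u - κ)⁻¹*(v - κ)⁻¹ - (u - κ)⁻¹*(v - κ)⁻¹*(u + v - κ)⁻¹ + (u + v)⁻¹*(v - κ)⁻¹ + (u + v)⁻¹*(u - κ)⁻¹ + 2*(u + v)⁻¹*(u - κ)⁻¹*(v - κ)⁻¹ - v⁻¹*(u + v)⁻¹*(u - κ)⁻¹ + 2*κ*(u + v)⁻¹*(u - κ)⁻¹*(v - κ)⁻¹)) * h1 + (-(-u⁻¹*(u + v)⁻¹*(v - κ)⁻¹ - u*u⁻¹*(u - κ)⁻¹*(v - κ)⁻¹ - u*u⁻¹*(u - κ)⁻¹*(v - κ)⁻¹*(u + v - κ)⁻¹ + u*u⁻¹*(u + v)⁻¹*(v - κ)⁻¹ + u*u⁻¹*(u + v)⁻¹*(u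 - κ)⁻¹ + 2*u*u⁻¹*(u + v)⁻¹*(u - κ)⁻¹*(v - κ)⁻¹ + 2*u*κ*u⁻¹*(u + v)⁻¹*(u - κ)⁻¹*(v - κ)⁻¹)) * h2 + (-(u⁻¹*v⁻¹*(u + v - κ)⁻¹ - u*v*u⁻¹*v⁻¹*(u - κ)⁻¹*(v - κ)⁻¹ - u*v*u⁻¹*v⁻¹*(u - κ)⁻¹*(v - κ)⁻¹*(u + v - κ)⁻¹)) * h3 + (-(v*u⁻¹*v⁻¹*(u + v)⁻¹*(u + v - κ)⁻¹ - v*u⁻¹*v⁻¹*(u + v)⁻¹*(v - κ)⁻¹ + u*u⁻¹*v⁻¹*(u + v)⁻¹*(u + v - κ)⁻¹ + u*v*u⁻¹*v⁻¹*(u + v)⁻¹*(v - κ)⁻¹)) * h4 + (-(-v*κ*u⁻¹*v⁻¹*(u + v)⁻¹*(u - κ)⁻¹*(u + v - κ)⁻¹ - u*u⁻¹*v⁻¹*(u + v)⁻¹*(u - κ)⁻¹ - u*κ*u⁻¹*v⁻¹*(u + v)⁻¹*(u - κ)⁻¹*(u + v - κ)⁻¹ + u*v*u⁻¹*v⁻¹*(u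 + v)⁻¹*(u - κ)⁻¹ + u*v*u⁻¹*v⁻¹*(u + v)⁻¹*(u - κ)⁻¹*(u + v - κ)⁻¹ + u^2*u⁻¹*v⁻¹*(u + v)⁻¹*(u - κ)⁻¹*(u + v - κ)⁻¹)) * h5 + (-(v*κ*u⁻¹*v⁻¹*(u + v)⁻¹*(u - κ)⁻¹*(v - κ)⁻¹ + u*κ*u⁻¹*v⁻¹*(u + v)⁻¹*(u - κ)⁻¹*(v - κ)⁻¹)) * h6
  · ring1
  · linear_combination (-((v - κ)⁻¹*(u + v - κ)⁻¹)) * h1 + (-(u⁻¹*(u + v - κ)⁻¹)) * h5 + (-(-u⁻¹*(v - κ)⁻¹)) * h6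

end BrauerRels

/-- Disjoint `ρ`-factors commute. -/
theorem rho_comm (hB : BrauerRels K A ω s ε) (κ : K) (i j k l : ℕ)
    (h1 : i ≠ k) (h2 : i ≠ l) (h3 : j ≠ k) (h4 : j ≠ l) (u v : K) :
    Commute (brauerRho κ s ε i j u) (brauerRho κ s ε k l v) := by
  have css : Commute (s i j) (s k l) := hB.ss_comm i j k l h1 h2 h3 h4
  have cse : Commute (s i j) (ε k l) := hB.se_comm i j k l h1 h2 h3 h4
  have ces : Commute (ε i j) (s k l) :=
    (hB.se_comm k l i j h1.symm h3.symm h2.symm h4.symm).symm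
  have cee : Commute (ε i j) (ε k l) := hB.ee_comm i j k l h1 h2 h3 h4
  unfold brauerRho
  have cs : Commute (1 - u⁻¹ • s i j + (u - κ)⁻¹ • ε i j) (s k l) :=
    ((Commute.one_left _).sub_left (css.smul_left _)).add_left (ces.smul_left _)
  have ce : Commute (1 - u⁻¹ • s i j + (u - κ)⁻¹ • ε i j) (ε k l) :=
    ((Commute.one_left _).sub_left (cse.smul_left _)).add_left (cee.smul_left _)
  exact ((Commute.one_right _).sub_right (cs.smul_right _)).add_right (ce.smul_right _)

theorem e_mul_rho (hB : BrauerRels K A ω s ε) (k l : ℕ) (hkl : k ≠ l) (hω : ω ≠ 0) :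
    ε k l * brauerRho (ω / 2 - 1) s ε k l (-1) = 0 := by
  rw [brauerRho, mul_add, mul_sub, mul_one, mul_smul_comm, mul_smul_comm,
    hB.es k l hkl, hB.e_sq k l hkl, smul_smul]
  have hc : ((-1 : K) - (ω / 2 - 1))⁻¹ * ω = -2 := by
    rw [show (-1 : K) - (ω / 2 - 1) = -(ω / 2) by ring, inv_neg, inv_div, neg_mul,
      div_mul_cancel₀ _ hω]
  rw [hc]
  match_scalars
  norm_num

theorem s_mul_rho (hB : BrauerRels K A ω s ε) (κ : K) (k l : ℕ) (hkl : k ≠ l) :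
    s k l * brauerRho κ s ε k l (-1) = brauerRho κ s ε k l (-1) := by
  rw [brauerRho, mul_add, mul_sub, mul_one, mul_smul_comm, mul_smul_comm,
    hB.s_sq k l hkl, hB.se k l hkl]
  have h1 : ((-1 : K))⁻¹ = -1 := by norm_num
  rw [h1]
  module

/-- Product of `ρ`-factors over a list of pairs. -/
noncomputable def rhoP (κ : K) (s ε : ℕ → ℕ → A) (l : List (ℕ × ℕ)) : A :=
  (l.map fun p => brauerRho κ s ε p.1 p.2 ((p.1 : K) - (p.2 : K))).prod

theorem rhoP_append (κ : K) (l₁ l₂ : List (ℕ × ℕ)) :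
    rhoP (A := A) κ s ε (l₁ ++ l₂) = rhoP κ s ε l₁ * rhoP κ s ε l₂ := by
  simp [rhoP]

theorem rhoP_cons (κ : K) (a b : ℕ) (l : List (ℕ × ℕ)) :
    rhoP (A := A) κ s ε ((a, b) :: l) =
      brauerRho κ s ε a b ((a : K) - (b : K)) * rhoP κ s ε l := by
  simp [rhoP]

theorem commute_rho_list (hB : BrauerRels K A ω s ε) (κ : K) (k : ℕ) (l : List (ℕ × ℕ))
    (h : ∀ p ∈ l, p.1 ≠ k ∧ p.1 ≠ k + 1 ∧ p.2 ≠ k ∧ p.2 ≠ k + 1) (w : K) :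
    Commute (brauerRho κ s ε k (k + 1) w) (rhoP κ s ε l) := by
  unfold rhoP
  refine Commute.list_prod_right _ _ fun x hx => ?_
  simp only [List.mem_map] at hx
  obtain ⟨p, hp, rfl⟩ := hx
  obtain ⟨h1, h2, h3, h4⟩ := h p hp
  exact (rho_comm hB κ p.1 p.2 k (k + 1) h1 h2 h3 h4 _ _).symm

def rowL (m n : ℕ) : List (ℕ × ℕ) := (List.range' (m + 1) (n - (m + 1))).map fun j => (m, j)

def pairsL (m n : ℕ) : List (ℕ × ℕ) := (List.range' m (n - m)).flatMap fun i => rowL i n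

theorem pairsL_succ {m n : ℕ} (h : m < n) : pairsL m n = rowL m n ++ pairsL (m + 1) n := by
  unfold pairsL
  rw [show n - m = (n - (m + 1)) + 1 by omega, List.range'_succ]
  simp

theorem filter_range_eq (i : ℕ) :
    ∀ n : ℕ, (List.range n).filter (fun j => i < j) = List.range' (i + 1) (n - (i + 1))
  | 0 => by simp
  | (n + 1) => by
    rw [List.range_succ, List.filter_append, filter_range_eq i n]
    by_cases h : i < n
    · rw [show (n + 1) - (i + 1) = (n - (i + 1)) + 1 by omega, List.range'_1_concat,
        show (i + 1) + (n - (i + 1)) = n by omega]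
      simp [h]
    · rw [show (n + 1) - (i + 1) = n - (i + 1) by omega]
      simp [h]

theorem lexPairs_eq (n : ℕ) : lexPairs n = pairsL 0 n := by
  unfold lexPairs pairsL rowL
  rw [Nat.sub_zero, ← List.range_eq_range']
  exact congrArg (fun f => List.flatMap f (List.range n)) (funext fun i => by rw [filter_range_eq i n])

theorem rowL_split {m k n : ℕ} (hmk : m < k) (hkn : k + 1 < n) :
    rowL m n = ((List.range' (m + 1) (k - (m + 1))).map fun j => (m, j)) ++
      ((m, k) :: (m, k + 1) :: ((List.range' (k + 2) (n - (k + 2))).map fun j => (m, j))) := by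
  unfold rowL
  have h1 : List.range' (m + 1) (k - (m + 1)) ++
      List.range' ((m + 1) + (k - (m + 1))) ((n - (m + 1)) - (k - (m + 1)))
      = List.range' (m + 1) (((n - (m + 1)) - (k - (m + 1))) + (k - (m + 1))) :=
    by rw [List.range'_append_1, Nat.add_comm (k - (m + 1))]
  rw [show (m + 1) + (k - (m + 1)) = k by omega] at h1
  rw [show ((n - (m + 1)) - (k - (m + 1))) + (k - (m + 1)) = n - (m + 1) by omega] at h1
  rw [← h1, show (n - (m + 1)) - (k - (m + 1)) = ((n - (k + 2)) + 1) + 1 by omega,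
    List.range'_succ, List.range'_succ, show k + 1 + 1 = k + 2 by omega]
  simp

/-- Reassociation helper used to pull the `ρ_{k,k+1}(-1)` factor to the front. -/
theorem shuffle {PA r1 r2 PB r Y : A} (hybe : r1 * r2 * r = r * r2 * r1)
    (cA : r * PA = PA * r) (cB : r * PB = PB * r) :
    PA * (r1 * (r2 * PB)) * (r * Y) = r * (PA * (r2 * (r1 * (PB * Y)))) := by
  have h1 : PA * (r1 * (r2 * PB)) * (r * Y) = PA * (r1 * (r2 * (PB * (r * Y)))) := by
    simp only [mul_assoc]
  rw [h1, ← mul_assoc PB r Y, ← cB, mul_assoc r PB Y,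
    show r1 * (r2 * (r * (PB * Y))) = (r1 * r2 * r) * (PB * Y) by simp only [mul_assoc],
    hybe,
    show (r * r2 * r1) * (PB * Y) = r * (r2 * (r1 * (PB * Y))) by simp only [mul_assoc],
    ← mul_assoc PA r _, ← cA, mul_assoc r PA _]

theorem key [CharZero K] (hB : BrauerRels K A ω s ε) (n : ℕ)
    (hgen : ∀ i j : ℕ, i < n → j < n → i ≠ j → ((i : K) - (j : K)) - (ω / 2 - 1) ≠ 0) :
    ∀ d m k : ℕ, k - m = d → m ≤ k → k + 1 < n →
      ∃ X : A, rhoP (ω / 2 - 1) s ε (pairsL m n) =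
        brauerRho (ω / 2 - 1) s ε k (k + 1) (-1) * X := by
  intro d
  induction d with
  | zero =>
    intro m k hd hmk hk
    have hm : m = k := by omega
    subst hm
    rw [pairsL_succ (show m < n by omega), rhoP_append]
    have hrow : rowL m n = (m, m + 1) :: ((List.range' (m + 2) (n - (m + 2))).map
        fun j => (m, j)) := by
      unfold rowL
      rw [show n - (m + 1) = (n - (m + 2)) + 1 by omega, List.range'_succ,
        show m + 1 + 1 = m + 2 by omega]
      simp
    rw [hrow, rhoP_cons, show ((m : K) - ((m + 1 : ℕ) : K)) = -1 by push_cast; ring, mul_assoc]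
    exact ⟨_, rfl⟩
  | succ d ih =>
    intro m k hd hmk hk
    have hmk' : m < k := by omega
    obtain ⟨Y, hY⟩ := ih (m + 1) k (by omega) (by omega) hk
    rw [pairsL_succ (show m < n by omega), rhoP_append, hY, rowL_split hmk' hk, rhoP_append]
    have hc : rhoP (A := A) (ω / 2 - 1) s ε ((m, k) :: (m, k + 1) ::
        ((List.range' (k + 2) (n - (k + 2))).map fun j => (m, j))) =
        brauerRho (ω / 2 - 1) s ε m k ((m : K) - (k : K)) *
          (brauerRho (ω / 2 - 1) s ε m (k + 1) ((m : K) - ((k + 1 : ℕ) : K)) *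
            rhoP (ω / 2 - 1) s ε ((List.range' (k + 2) (n - (k + 2))).map fun j => (m, j))) := by
      rw [rhoP_cons, rhoP_cons]
    rw [hc]
    -- YBE for the middle factors
    have hmn : m < n := by omega
    have hkn : k < n := by omega
    have hk1n : k + 1 < n := hk
    have hmk1 : m ≠ k + 1 := by omega
    have hu : (m : K) - (k : K) ≠ 0 := sub_ne_zero.mpr (by exact_mod_cast hmk'.ne)
    have hv : (-1 : K) ≠ 0 := by norm_num
    have hcast : (m : K) - ((k + 1 : ℕ) : K) = ((m : K) - (k : K)) + (-1) := by
      push_cast; ring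
    have huv : ((m : K) - (k : K)) + (-1) ≠ 0 := by
      rw [← hcast]
      exact sub_ne_zero.mpr (by exact_mod_cast hmk1)
    have hu' : (m : K) - (k : K) - (ω / 2 - 1) ≠ 0 := hgen m k hmn hkn (by omega)
    have hv' : (-1 : K) - (ω / 2 - 1) ≠ 0 := by
      have := hgen k (k + 1) hkn hk1n (by omega)
      rwa [show ((k : K) - ((k + 1 : ℕ) : K)) = -1 by push_cast; ring] at this
    have huv' : ((m : K) - (k : K)) + (-1) - (ω / 2 - 1) ≠ 0 := by
      have := hgen m (k + 1) hmn hk1n hmk1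
      rwa [hcast] at this
    have hybe : brauerRho (ω / 2 - 1) s ε m k ((m : K) - (k : K)) *
        brauerRho (ω / 2 - 1) s ε m (k + 1) ((m : K) - ((k + 1 : ℕ) : K)) *
        brauerRho (ω / 2 - 1) s ε k (k + 1) (-1) =
        brauerRho (ω / 2 - 1) s ε k (k + 1) (-1) *
        brauerRho (ω / 2 - 1) s ε m (k + 1) ((m : K) - ((k + 1 : ℕ) : K)) *
        brauerRho (ω / 2 - 1) s ε m k ((m : K) - (k : K)) := by
      rw [hcast]
      exact hB.ybe m k (k + 1) (by omega) (by omega) hmk1 _ _ hu hv huv hu' hv' huv'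
    -- commutation with the outer segments
    have memA : ∀ p ∈ ((List.range' (m + 1) (k - (m + 1))).map fun j => (m, j)),
        p.1 ≠ k ∧ p.1 ≠ k + 1 ∧ p.2 ≠ k ∧ p.2 ≠ k + 1 := by
      intro p hp
      simp only [List.mem_map, List.mem_range'_1] at hp
      obtain ⟨j, hj, rfl⟩ := hp
      exact ⟨by omega, by omega, by omega, by omega⟩
    have memB : ∀ p ∈ ((List.range' (k + 2) (n - (k + 2))).map fun j => (m, j)),
        p.1 ≠ k ∧ p.1 ≠ k + 1 ∧ p.2 ≠ k ∧ p.2 ≠ k + 1 := by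
      intro p hp
      simp only [List.mem_map, List.mem_range'_1] at hp
      obtain ⟨j, hj, rfl⟩ := hp
      exact ⟨by omega, by omega, by omega, by omega⟩
    have cA := (commute_rho_list hB (ω / 2 - 1) k _ memA (-1)).eq
    have cB := (commute_rho_list hB (ω / 2 - 1) k _ memB (-1)).eq
    exact ⟨_, shuffle hybe cA cB⟩

end BrauerAux

/-- In the Brauer algebra `B_n(ω)`, the symmetrizer
`S_n = (1/n!) ∏_{1 ≤ i < j ≤ n} ρ_{ij}(i - j)` (lexicographically ordered product) satisfies
`ε_k S_n = 0` and `s_k S_n = S_n` for all `k = 1, …, n-1`. -/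
theorem brauer_symmetrizer_props {K : Type*} [Field K] [CharZero K] {A : Type*} [Ring A]
    [Algebra K A] (ω : K) (s ε : ℕ → ℕ → A) (hB : BrauerRels K A ω s ε) (n : ℕ)
    (hgen : ∀ i j : ℕ, i < n → j < n → i ≠ j → ((i : K) - (j : K)) - (ω / 2 - 1) ≠ 0) :
    ∀ k : ℕ, k + 1 < n →
      ε k (k + 1) * brauerSymmetrizer ω s ε n = 0 ∧
      s k (k + 1) * brauerSymmetrizer ω s ε n = brauerSymmetrizer ω s ε n := by
  intro k hk
  have hkk1 : k ≠ k + 1 := by omega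
  have hω : ω ≠ 0 := by
    intro h
    apply hgen k (k + 1) (by omega) (by omega) hkk1
    rw [h]; push_cast; ring
  obtain ⟨X, hX⟩ := key hB n hgen k 0 k (by omega) (Nat.zero_le k) hk
  have hS : brauerSymmetrizer ω s ε n =
      ((n.factorial : K))⁻¹ • (brauerRho (ω / 2 - 1) s ε k (k + 1) (-1) * X) := by
    rw [brauerSymmetrizer,
      show (((lexPairs n).map fun p =>
          brauerRho (ω / 2 - 1) s ε p.1 p.2 ((p.1 : K) - (p.2 : K))).prod)
        = rhoP (ω / 2 - 1) s ε (pairsL 0 n) by rw [← lexPairs_eq]; rfl,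
      hX]
  constructor
  · rw [hS, mul_smul_comm, ← mul_assoc, e_mul_rho hB k (k + 1) hkk1 hω, zero_mul, smul_zero]
  · rw [hS, mul_smul_comm, ← mul_assoc, s_mul_rho hB (ω / 2 - 1) k (k + 1) hkk1]
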